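/- A single row of A sampled with length-squared probabilities gives a 2-factor approximation to the best-fit line in expectation: if s is a random row of A with P(s = A^(i)) = ‖A^(i)‖^2/‖A‖_F^2, and π_s(A) denotes the projection of each row of A onto the line spanned by s, then E[‖A − π_s(A)‖_F^2] ≤ 2·‖A − π_1(A)‖_F^2. -/

import Mathlib

open Finset

lemma proj_norm_sq {d : ℕ} (x y : EuclideanSpace ℝ (Fin d)) (hy : y ≠ 0) :
    ‖x - ((inner ℝ x y : ℝ) / ‖y‖ ^ 2) • y‖ ^ 2 = ‖x‖ ^ 2 - (inner ℝ x y : ℝ) ^ 2 / ‖y‖ ^ 2 := by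
  have hy0 : ‖y‖ ≠ 0 := norm_ne_zero_iff.mpr hy
  rw [norm_sub_sq_real, real_inner_smul_right, norm_smul, mul_pow, Real.norm_eq_abs, sq_abs]
  field_simp
  ring

theorem stmt12 (n d : ℕ) (a : Fin n → EuclideanSpace ℝ (Fin d))
    (ha : ∀ i, a i ≠ 0) :
    ∀ v : EuclideanSpace ℝ (Fin d), ‖v‖ = 1 →
      ∑ k, (‖a k‖ ^ 2 / ∑ j, ‖a j‖ ^ 2) *
          (∑ i, ‖a i - ((inner ℝ (a i) (a k) : ℝ) / ‖a k‖ ^ 2) • a k‖ ^ 2)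
        ≤ 2 * ∑ i, ‖a i - (inner ℝ (a i) v : ℝ) • v‖ ^ 2 := by
  intro v hv
  rcases Nat.eq_zero_or_pos n with hn | hn
  · subst hn; simp
  set F : ℝ := ∑ j, ‖a j‖ ^ 2 with hF
  have hF0 : 0 < F := by
    apply Finset.sum_pos
    · intro i _
      have := norm_pos_iff.mpr (ha i)
      positivity
    · exact Finset.univ_nonempty_iff.mpr (Fin.pos_iff_nonempty.mp hn)
  set S : ℝ := ∑ i, (inner ℝ (a i) v : ℝ) ^ 2 with hS
  set T : ℝ := ∑ k, ∑ i, (inner ℝ (a i) (a k) : ℝ) ^ 2 with hT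
  have hS0 : 0 ≤ S := Finset.sum_nonneg fun i _ => sq_nonneg _
  have hT0 : 0 ≤ T := Finset.sum_nonneg fun k _ => Finset.sum_nonneg fun i _ => sq_nonneg _
  -- rewrite RHS
  have hRHS : ∑ i, ‖a i - (inner ℝ (a i) v : ℝ) • v‖ ^ 2 = F - S := by
    rw [hF, hS, ← Finset.sum_sub_distrib]
    refine Finset.sum_congr rfl fun i _ => ?_
    have hv0 : v ≠ 0 := by intro h; rw [h, norm_zero] at hv; norm_num at hv
    have := proj_norm_sq (a i) v hv0
    rw [hv] at this; simpa using this
  -- rewrite LHS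
  have hLHS : ∑ k, (‖a k‖ ^ 2 / F) *
      (∑ i, ‖a i - ((inner ℝ (a i) (a k) : ℝ) / ‖a k‖ ^ 2) • a k‖ ^ 2) = F - T / F := by
    have : ∀ k, (‖a k‖ ^ 2 / F) *
        (∑ i, ‖a i - ((inner ℝ (a i) (a k) : ℝ) / ‖a k‖ ^ 2) • a k‖ ^ 2)
        = ‖a k‖ ^ 2 - (∑ i, (inner ℝ (a i) (a k) : ℝ) ^ 2) / F := by
      intro k
      have hk : ‖a k‖ ≠ 0 := norm_ne_zero_iff.mpr (ha k)
      have h1 : ∑ i, ‖a i - ((inner ℝ (a i) (a k) : ℝ) / ‖a k‖ ^ 2) • a k‖ ^ 2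
          = F - (∑ i, (inner ℝ (a i) (a k) : ℝ) ^ 2) / ‖a k‖ ^ 2 := by
        rw [hF, Finset.sum_div, ← Finset.sum_sub_distrib]
        exact Finset.sum_congr rfl fun i _ => proj_norm_sq (a i) (a k) (ha k)
      rw [h1]
      field_simp
    rw [Finset.sum_congr rfl fun k _ => this k, Finset.sum_sub_distrib, ← hF,
      ← Finset.sum_div, ← hT]
  rw [hLHS, hRHS]
  -- key inequality: S ^ 2 ≤ T
  have key : S ^ 2 ≤ T := by
    set w : EuclideanSpace ℝ (Fin d) := ∑ i, (inner ℝ (a i) v : ℝ) • a i with hw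
    have hwk : ∀ k, (inner ℝ w (a k) : ℝ) = ∑ i, (inner ℝ (a i) v : ℝ) * (inner ℝ (a i) (a k) : ℝ) := by
      intro k
      rw [hw, sum_inner]
      exact Finset.sum_congr rfl fun i _ => real_inner_smul_left _ _ _
    have hSw : (inner ℝ w v : ℝ) = S := by
      rw [hw, sum_inner, hS]
      refine Finset.sum_congr rfl fun i _ => ?_
      rw [real_inner_smul_left, sq]
    -- S^2 ≤ ‖w‖^2
    have h1 : S ^ 2 ≤ ‖w‖ ^ 2 := by
      calc S ^ 2 = (inner ℝ w v : ℝ) ^ 2 := by rw [hSw]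
        _ ≤ ‖w‖ ^ 2 * ‖v‖ ^ 2 := by
            rw [← mul_pow]
            exact pow_le_pow_left₀ (abs_nonneg _) (abs_real_inner_le_norm w v) 2 |>.trans_eq' (by rw [sq_abs])
        _ = ‖w‖ ^ 2 := by rw [hv]; ring
    -- ‖w‖^4 ≤ S * ∑_k ⟨w, a k⟩^2
    have h2 : (‖w‖ ^ 2) ^ 2 ≤ S * ∑ k, (inner ℝ w (a k) : ℝ) ^ 2 := by
      have hnw : ‖w‖ ^ 2 = ∑ k, (inner ℝ (a k) v : ℝ) * (inner ℝ w (a k) : ℝ) := by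
        rw [← real_inner_self_eq_norm_sq]
        nth_rewrite 1 [hw]
        rw [sum_inner]
        refine Finset.sum_congr rfl fun k _ => ?_
        rw [real_inner_smul_left, real_inner_comm (a k) w]
      rw [hnw]
      calc (∑ k, (inner ℝ (a k) v : ℝ) * (inner ℝ w (a k) : ℝ)) ^ 2
          ≤ (∑ k, (inner ℝ (a k) v : ℝ) ^ 2) * ∑ k, (inner ℝ w (a k) : ℝ) ^ 2 :=
            Finset.sum_mul_sq_le_sq_mul_sq _ _ _
        _ = S * ∑ k, (inner ℝ w (a k) : ℝ) ^ 2 := by rw [hS]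
    -- ∑_k ⟨w, a k⟩^2 ≤ S * T
    have h3 : ∑ k, (inner ℝ w (a k) : ℝ) ^ 2 ≤ S * T := by
      rw [hT, Finset.mul_sum]
      refine Finset.sum_le_sum fun k _ => ?_
      rw [hwk k]
      calc (∑ i, (inner ℝ (a i) v : ℝ) * (inner ℝ (a i) (a k) : ℝ)) ^ 2
          ≤ (∑ i, (inner ℝ (a i) v : ℝ) ^ 2) * ∑ i, (inner ℝ (a i) (a k) : ℝ) ^ 2 :=
            Finset.sum_mul_sq_le_sq_mul_sq _ _ _
        _ = S * ∑ i, (inner ℝ (a i) (a k) : ℝ) ^ 2 := by rw [hS]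
    rcases eq_or_lt_of_le hS0 with hSe | hSp
    · nlinarith
    · have : (S ^ 2) ^ 2 ≤ S ^ 2 * T := by
        calc (S ^ 2) ^ 2 ≤ (‖w‖ ^ 2) ^ 2 := by nlinarith [sq_nonneg (‖w‖^2), h1]
          _ ≤ S * (S * T) := h2.trans (by nlinarith)
          _ = S ^ 2 * T := by ring
      nlinarith
  -- final arithmetic
  have h2SF : 2 * S * F - F ^ 2 ≤ S ^ 2 := by nlinarith [sq_nonneg (S - F)]
  have hdiv : 2 * S - F ≤ T / F := by
    rw [le_div_iff₀ hF0]; nlinarith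
  linarith
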